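/- Let n ≥ 1 and λ > 0. For all x, y ∈ ℝⁿ, the softmax map satisfies the co-coercivity inequality ⟨σ_λ(x) − σ_λ(y), x − y⟩ ≥ (2/λ) ‖σ_λ(x) − σ_λ(y)‖₂², where ⟨·,·⟩ is the Euclidean inner product. -/

import Mathlib

open scoped ENNReal BigOperators

/-- The softmax function with inverse temperature `lam`. -/
noncomputable def softmax {n : ℕ} (lam : ℝ) (x : Fin n → ℝ) : Fin n → ℝ :=
  fun i => Real.exp (lam * x i) / ∑ j, Real.exp (lam * x j)

/-- The ℓ_p norm on `Fin n → ℝ`, for `p ∈ [1, ∞]`. -/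
noncomputable def lpNorm {n : ℕ} (p : ℝ≥0∞) (x : Fin n → ℝ) : ℝ :=
  if p = ⊤ then ⨆ i, |x i| else (∑ i, |x i| ^ p.toReal) ^ (1 / p.toReal)

/-- The ℓ_p-induced operator norm of a matrix. -/
noncomputable def opNorm {n m : ℕ} (p : ℝ≥0∞) (A : Matrix (Fin n) (Fin m) ℝ) : ℝ :=
  ⨆ v : {v : Fin m → ℝ // v ≠ 0}, lpNorm p (A.mulVec v.val) / lpNorm p v.val

/-- The matrix `Diag(s) - s sᵀ` (Jacobian of softmax with `lam = 1` at a point with value `s`). -/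
noncomputable def softmaxJac {n : ℕ} (s : Fin n → ℝ) : Matrix (Fin n) (Fin n) ℝ :=
  Matrix.diagonal s - Matrix.vecMulVec s s

/-- The open (interior of the) probability simplex. -/
def openSimplex (n : ℕ) : Set (Fin n → ℝ) :=
  {u | (∀ i, 0 < u i) ∧ ∑ i, u i = 1}

/-- The (closed) probability simplex. -/
def probSimplex (n : ℕ) : Set (Fin n → ℝ) :=
  {u | (∀ i, 0 ≤ u i) ∧ ∑ i, u i = 1}

open Finset

namespace SMC
variable {n : ℕ}

noncomputable def sm (u : Fin n → ℝ) (i : Fin n) : ℝ :=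
  Real.exp (u i) / ∑ j, Real.exp (u j)

noncomputable def Sf (a b : Fin n → ℝ) (t : ℝ) : ℝ := ∑ i, Real.exp (a i + t * b i)
noncomputable def S1 (a b : Fin n → ℝ) (t : ℝ) : ℝ := ∑ i, b i * Real.exp (a i + t * b i)
noncomputable def S2 (a b : Fin n → ℝ) (t : ℝ) : ℝ := ∑ i, b i ^ 2 * Real.exp (a i + t * b i)
noncomputable def lse (a b : Fin n → ℝ) (t : ℝ) : ℝ := Real.log (Sf a b t)
noncomputable def lse1 (a b : Fin n → ℝ) (t : ℝ) : ℝ := S1 a b t / Sf a b t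
noncomputable def lse2 (a b : Fin n → ℝ) (t : ℝ) : ℝ :=
  S2 a b t / Sf a b t - (S1 a b t / Sf a b t) ^ 2
noncomputable def wt (a b : Fin n → ℝ) (t : ℝ) (i : Fin n) : ℝ :=
  Real.exp (a i + t * b i) / Sf a b t

lemma Sf_pos [NeZero n] (a b : Fin n → ℝ) (t : ℝ) : 0 < Sf a b t :=
  Finset.sum_pos (fun _ _ => Real.exp_pos _) (univ_nonempty)

lemma hasDerivAt_exp_term (a b : Fin n → ℝ) (i : Fin n) (t : ℝ) :
    HasDerivAt (fun s => Real.exp (a i + s * b i)) (b i * Real.exp (a i + t * b i)) t := by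
  have h : HasDerivAt (fun s : ℝ => a i + s * b i) (b i) t := by
    simpa using (hasDerivAt_mul_const (b i)).const_add (a i)
  simpa [mul_comm] using h.exp

lemma hasDerivAt_Sf (a b : Fin n → ℝ) (t : ℝ) : HasDerivAt (Sf a b) (S1 a b t) t :=
  HasDerivAt.fun_sum (fun i _ => hasDerivAt_exp_term a b i t)

lemma hasDerivAt_S1 (a b : Fin n → ℝ) (t : ℝ) : HasDerivAt (S1 a b) (S2 a b t) t := by
  have h : ∀ i ∈ univ, HasDerivAt (fun s => b i * Real.exp (a i + s * b i))
      (b i ^ 2 * Real.exp (a i + t * b i)) t := by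
    intro i _
    have := (hasDerivAt_exp_term a b i t).const_mul (b i)
    exact this.congr_deriv (by ring)
  exact HasDerivAt.fun_sum h

lemma hasDerivAt_lse [NeZero n] (a b : Fin n → ℝ) (t : ℝ) :
    HasDerivAt (lse a b) (lse1 a b t) t :=
  (hasDerivAt_Sf a b t).log (Sf_pos a b t).ne'

lemma hasDerivAt_lse1 [NeZero n] (a b : Fin n → ℝ) (t : ℝ) :
    HasDerivAt (lse1 a b) (lse2 a b t) t := by
  have h := (hasDerivAt_S1 a b t).div (hasDerivAt_Sf a b t) (Sf_pos a b t).ne'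
  refine h.congr_deriv ?_
  have hS := (Sf_pos a b t).ne'
  unfold lse2
  field_simp

lemma wt_nonneg [NeZero n] (a b : Fin n → ℝ) (t : ℝ) (i : Fin n) : 0 ≤ wt a b t i :=
  div_nonneg (Real.exp_pos _).le (Sf_pos a b t).le

lemma wt_sum [NeZero n] (a b : Fin n → ℝ) (t : ℝ) : ∑ i, wt a b t i = 1 := by
  unfold wt
  rw [← Finset.sum_div]
  exact div_self (Sf_pos a b t).ne'

lemma lse2_eq [NeZero n] (a b : Fin n → ℝ) (t : ℝ) :
    lse2 a b t = ∑ i, wt a b t i * b i ^ 2 - (∑ i, wt a b t i * b i) ^ 2 := by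
  unfold lse2 S1 S2 wt
  rw [Finset.sum_div, Finset.sum_div]
  congr 1
  · exact Finset.sum_congr rfl fun i _ => by ring
  · congr 1
    exact Finset.sum_congr rfl fun i _ => by ring

lemma lse2_nonneg [NeZero n] (a b : Fin n → ℝ) (t : ℝ) : 0 ≤ lse2 a b t := by
  rw [lse2_eq]
  have h := Finset.sum_mul_sq_le_sq_mul_sq univ (fun i => Real.sqrt (wt a b t i))
    (fun i => Real.sqrt (wt a b t i) * b i)
  have e1 : ∀ i : Fin n, Real.sqrt (wt a b t i) * (Real.sqrt (wt a b t i) * b i)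
      = wt a b t i * b i := fun i => by
    rw [← mul_assoc, Real.mul_self_sqrt (wt_nonneg a b t i)]
  have e2 : ∀ i : Fin n, (Real.sqrt (wt a b t i)) ^ 2 = wt a b t i := fun i =>
    Real.sq_sqrt (wt_nonneg a b t i)
  have e3 : ∀ i : Fin n, (Real.sqrt (wt a b t i) * b i) ^ 2 = wt a b t i * b i ^ 2 :=
    fun i => by rw [mul_pow, e2]
  simp only [e1, e2, e3] at h
  rw [wt_sum, one_mul] at h
  linarith

lemma var_le [NeZero n] (s d : Fin n → ℝ) (hs : ∀ i, 0 ≤ s i) (hsum : ∑ i, s i = 1) :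
    ∑ i, s i * d i ^ 2 - (∑ i, s i * d i) ^ 2 ≤ (1 / 2) * ∑ i, d i ^ 2 := by
  obtain ⟨A, -, hA⟩ := Finset.exists_max_image univ d univ_nonempty
  obtain ⟨B, -, hB⟩ := Finset.exists_min_image univ d univ_nonempty
  set c : ℝ := (d A + d B) / 2 with hc
  have shift : ∑ i, s i * (d i - c) ^ 2 - (∑ i, s i * (d i - c)) ^ 2
      = ∑ i, s i * d i ^ 2 - (∑ i, s i * d i) ^ 2 := by
    have e1 : ∑ i, s i * (d i - c) ^ 2
        = ∑ i, s i * d i ^ 2 - 2 * c * ∑ i, s i * d i + c ^ 2 := by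
      have e0 : ∑ i, s i * (d i - c) ^ 2
          = ∑ i, (s i * d i ^ 2 - 2 * c * (s i * d i) + c ^ 2 * s i) :=
        Finset.sum_congr rfl fun i _ => by ring
      rw [e0, Finset.sum_add_distrib, Finset.sum_sub_distrib, ← Finset.mul_sum,
        ← Finset.mul_sum, hsum, mul_one]
    have e2 : ∑ i, s i * (d i - c) = ∑ i, s i * d i - c := by
      calc ∑ i, s i * (d i - c) = ∑ i, (s i * d i - c * s i) :=
            Finset.sum_congr rfl fun i _ => by ring
        _ = ∑ i, s i * d i - c * ∑ i, s i := by
            rw [Finset.sum_sub_distrib, Finset.mul_sum]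
        _ = ∑ i, s i * d i - c := by rw [hsum, mul_one]
    rw [e1, e2]; ring
  have hb1 : ∑ i, s i * (d i - c) ^ 2 ≤ ((d A - d B) / 2) ^ 2 := by
    calc ∑ i, s i * (d i - c) ^ 2 ≤ ∑ i, s i * ((d A - d B) / 2) ^ 2 := by
          apply Finset.sum_le_sum
          intro i _
          apply mul_le_mul_of_nonneg_left _ (hs i)
          apply sq_le_sq'
          · have := hB i (mem_univ i); simp only [hc]; linarith
          · have := hA i (mem_univ i); simp only [hc]; linarith
      _ = ((d A - d B) / 2) ^ 2 := by rw [← Finset.sum_mul, hsum, one_mul]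
  have hb2 : ((d A - d B) / 2) ^ 2 ≤ (1 / 2) * ∑ i, d i ^ 2 := by
    rcases eq_or_ne A B with h | h
    · have h0 : d A - d B = 0 := by rw [h]; ring
      rw [h0]
      simpa using mul_nonneg (by norm_num : (0:ℝ) ≤ 1/2)
        (Finset.sum_nonneg fun i _ => sq_nonneg (d i))
    · have hsub : d A ^ 2 + d B ^ 2 ≤ ∑ i, d i ^ 2 := by
        have := Finset.sum_le_sum_of_subset_of_nonneg
          (Finset.subset_univ {A, B}) (fun i _ _ => sq_nonneg (d i))
        rwa [Finset.sum_pair h] at this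
      nlinarith [sq_nonneg (d A + d B)]
  have hnn : (0:ℝ) ≤ (∑ i, s i * (d i - c)) ^ 2 := sq_nonneg _
  linarith [shift]

lemma taylor_ub {h h1 h2 : ℝ → ℝ} {K : ℝ}
    (hd : ∀ t, HasDerivAt h (h1 t) t) (hd2 : ∀ t, HasDerivAt h1 (h2 t) t)
    (hK : ∀ t, h2 t ≤ K) : h 1 ≤ h 0 + h1 0 + K / 2 := by
  set ψ : ℝ → ℝ := fun t => h1 0 + K * t - h1 t with hψ
  have hψd : ∀ t, HasDerivAt ψ (K - h2 t) t := by
    intro t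
    simpa using ((hasDerivAt_const t (h1 0)).fun_add ((hasDerivAt_id t).const_mul K)).fun_sub (hd2 t)
  have hψmono : Monotone ψ := by
    apply monotone_of_deriv_nonneg
    · exact fun t => (hψd t).differentiableAt
    · intro t; rw [(hψd t).deriv]; linarith [hK t]
  set η : ℝ → ℝ := fun t => h 0 + h1 0 * t + K * t ^ 2 / 2 - h t with hη
  have hηd : ∀ t, HasDerivAt η (ψ t) t := by
    intro t
    have hpoly : HasDerivAt (fun t : ℝ => h 0 + h1 0 * t + K * t ^ 2 / 2)
        (h1 0 + K * t) t := by
      have h2' : HasDerivAt (fun t : ℝ => K * t ^ 2 / 2) (K * t) t := by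
        have := ((hasDerivAt_pow 2 t).const_mul K).div_const 2
        exact this.congr_deriv (by push_cast; ring)
      simpa using (((hasDerivAt_id t).const_mul (h1 0)).const_add (h 0)).fun_add h2'
    simpa [hψ, hη] using hpoly.fun_sub (hd t)
  have hηmono : MonotoneOn η (Set.Ici (0:ℝ)) := by
    apply monotoneOn_of_deriv_nonneg (convex_Ici 0)
    · exact fun t _ => ((hηd t).differentiableAt).continuousAt.continuousWithinAt
    · exact fun t _ => ((hηd t).differentiableAt).differentiableWithinAt
    · intro t ht
      rw [(hηd t).deriv]
      have h0 : ψ 0 ≤ ψ t := hψmono (le_of_lt (by simpa using ht))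
      simpa [hψ] using h0
  have := hηmono (Set.self_mem_Ici) (by norm_num : (1:ℝ) ∈ Set.Ici (0:ℝ)) zero_le_one
  simp only [hη] at this
  nlinarith [this]

lemma taylor_lb {h h1 h2 : ℝ → ℝ}
    (hd : ∀ t, HasDerivAt h (h1 t) t) (hd2 : ∀ t, HasDerivAt h1 (h2 t) t)
    (hK : ∀ t, 0 ≤ h2 t) : h 0 + h1 0 ≤ h 1 := by
  have := taylor_ub (h := fun t => -h t) (h1 := fun t => -h1 t) (h2 := fun t => -h2 t)
    (K := 0) (fun t => (hd t).neg) (fun t => (hd2 t).neg)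
    (fun t => by simpa using neg_nonpos.mpr (hK t))
  simp at this
  linarith

lemma lse_zero (u b : Fin n → ℝ) : lse u b 0 = Real.log (∑ i, Real.exp (u i)) := by
  unfold lse Sf
  congr 1
  exact Finset.sum_congr rfl fun i _ => by norm_num

lemma lse_one (u v : Fin n → ℝ) :
    lse u (fun i => v i - u i) 1 = Real.log (∑ i, Real.exp (v i)) := by
  unfold lse Sf
  congr 1
  exact Finset.sum_congr rfl fun i _ => congrArg Real.exp (by ring)

lemma lse1_zero (u v : Fin n → ℝ) :
    lse1 u (fun i => v i - u i) 0 = ∑ i, sm u i * (v i - u i) := by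
  unfold lse1 S1 Sf sm
  simp only [zero_mul, add_zero]
  rw [Finset.sum_div]
  exact Finset.sum_congr rfl fun i _ => by ring

lemma keyB [NeZero n] (u v : Fin n → ℝ) :
    Real.log (∑ i, Real.exp (v i)) ≤ Real.log (∑ i, Real.exp (u i))
      + ∑ i, sm u i * (v i - u i) + (1/4) * ∑ i, (v i - u i) ^ 2 := by
  set b : Fin n → ℝ := fun i => v i - u i with hb
  have hbd : ∀ t, lse2 u b t ≤ (1/2) * ∑ i, b i ^ 2 := fun t => by
    rw [lse2_eq]
    exact var_le (wt u b t) b (wt_nonneg u b t) (wt_sum u b t)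
  have hT := taylor_ub (hasDerivAt_lse u b) (hasDerivAt_lse1 u b) hbd
  rw [lse_one u v] at hT
  rw [lse_zero u b, lse1_zero u v] at hT
  calc Real.log (∑ i, Real.exp (v i))
      ≤ Real.log (∑ i, Real.exp (u i)) + ∑ i, sm u i * (v i - u i)
        + (1/2) * (∑ i, b i ^ 2) / 2 := hT
    _ = Real.log (∑ i, Real.exp (u i)) + ∑ i, sm u i * (v i - u i)
        + (1/4) * ∑ i, (v i - u i) ^ 2 := by rw [hb]; ring

lemma keyA [NeZero n] (u v : Fin n → ℝ) :
    Real.log (∑ i, Real.exp (u i)) + ∑ i, sm u i * (v i - u i)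
      ≤ Real.log (∑ i, Real.exp (v i)) := by
  set b : Fin n → ℝ := fun i => v i - u i with hb
  have hT := taylor_lb (hasDerivAt_lse u b) (hasDerivAt_lse1 u b) (lse2_nonneg u b)
  rw [lse_one u v] at hT
  rw [lse_zero u b, lse1_zero u v] at hT
  exact hT

lemma star [NeZero n] (u v : Fin n → ℝ) :
    Real.log (∑ i, Real.exp (u i)) + ∑ i, sm u i * (v i - u i)
      + ∑ i, (sm v i - sm u i) ^ 2 ≤ Real.log (∑ i, Real.exp (v i)) := by
  set z : Fin n → ℝ := fun i => v i - 2 * (sm v i - sm u i) with hz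
  have hA := keyA u z
  have hB := keyB v z
  have I1 : ∑ i, sm u i * (z i - u i)
      = ∑ i, sm u i * (v i - u i) - 2 * ∑ i, sm u i * (sm v i - sm u i) := by
    rw [Finset.mul_sum, ← Finset.sum_sub_distrib]
    exact Finset.sum_congr rfl fun i _ => by simp only [hz]; ring
  have I2 : ∑ i, sm v i * (z i - v i) = -(2 * ∑ i, sm v i * (sm v i - sm u i)) := by
    rw [Finset.mul_sum, ← Finset.sum_neg_distrib]
    exact Finset.sum_congr rfl fun i _ => by simp only [hz]; ring
  have I3 : ∑ i, (z i - v i) ^ 2 = 4 * ∑ i, (sm v i - sm u i) ^ 2 := by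
    rw [Finset.mul_sum]
    exact Finset.sum_congr rfl fun i _ => by simp only [hz]; ring
  have I4 : ∑ i, (sm v i - sm u i) ^ 2
      = ∑ i, sm v i * (sm v i - sm u i) - ∑ i, sm u i * (sm v i - sm u i) := by
    rw [← Finset.sum_sub_distrib]
    exact Finset.sum_congr rfl fun i _ => by ring
  rw [I1] at hA
  rw [I2, I3] at hB
  have := hA.trans hB
  linarith [this, I4]

lemma cocoercive_core [NeZero n] (u v : Fin n → ℝ) :
    2 * ∑ i, (sm u i - sm v i) ^ 2 ≤ ∑ i, (sm u i - sm v i) * (u i - v i) := by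
  have h1 := star u v
  have h2 := star v u
  have Isym : ∑ i, (sm u i - sm v i) ^ 2 = ∑ i, (sm v i - sm u i) ^ 2 :=
    Finset.sum_congr rfl fun i _ => by ring
  have I : ∑ i, (sm u i - sm v i) * (u i - v i)
      = -(∑ i, sm u i * (v i - u i) + ∑ i, sm v i * (u i - v i)) := by
    rw [← Finset.sum_add_distrib, ← Finset.sum_neg_distrib]
    exact Finset.sum_congr rfl fun i _ => by ring
  rw [Isym, I]
  linarith [h1, h2]

end SMC

lemma lp2_sq {n : ℕ} (d : Fin n → ℝ) : lpNorm 2 d ^ 2 = ∑ i, d i ^ 2 := by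
  have h2 : ((2:ℝ≥0∞) ≠ ⊤) := by norm_num
  rw [lpNorm, if_neg h2]
  have ht : (2:ℝ≥0∞).toReal = 2 := by norm_num
  rw [ht]
  have hsum : ∑ i, |d i| ^ (2:ℝ) = ∑ i, d i ^ 2 := by
    refine Finset.sum_congr rfl fun i _ => ?_
    rw [show (2:ℝ) = ((2:ℕ):ℝ) by norm_num, Real.rpow_natCast, sq_abs]
  rw [hsum]
  have hnn : (0:ℝ) ≤ ∑ i, d i ^ 2 := Finset.sum_nonneg fun i _ => sq_nonneg _
  rw [show ((∑ i, d i ^ 2) ^ ((1:ℝ)/2)) ^ 2 = ((∑ i, d i ^ 2) ^ ((1:ℝ)/2)) ^ ((2:ℕ):ℝ) by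
    rw [Real.rpow_natCast]]
  rw [← Real.rpow_mul hnn]
  norm_num

/-- softmax is co-coercive with constant 2/lam in the Euclidean structure. -/
theorem softmax_cocoercive {n : ℕ} (hn : 1 ≤ n) (lam : ℝ) (hlam : 0 < lam)
    (x y : Fin n → ℝ) :
    (2 / lam) * lpNorm 2 (softmax lam x - softmax lam y) ^ 2 ≤
      ∑ i, (softmax lam x i - softmax lam y i) * (x i - y i) := by
  have : NeZero n := ⟨by omega⟩
  set u : Fin n → ℝ := fun i => lam * x i with hu
  set v : Fin n → ℝ := fun i => lam * y i with hv
  have hpu : softmax lam x = SMC.sm u := rfl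
  have hpv : softmax lam y = SMC.sm v := rfl
  have hcore := SMC.cocoercive_core u v
  have hlin : ∑ i, (SMC.sm u i - SMC.sm v i) * (u i - v i)
      = lam * ∑ i, (SMC.sm u i - SMC.sm v i) * (x i - y i) := by
    rw [Finset.mul_sum]
    exact Finset.sum_congr rfl fun i _ => by simp only [hu, hv]; ring
  have hQ : lpNorm 2 (softmax lam x - softmax lam y) ^ 2
      = ∑ i, (SMC.sm u i - SMC.sm v i) ^ 2 := by
    rw [lp2_sq]
    exact Finset.sum_congr rfl fun i _ => by
      rw [Pi.sub_apply, hpu, hpv]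
  rw [hQ, hpu, hpv]
  rw [hlin] at hcore
  rw [div_mul_eq_mul_div, div_le_iff₀ hlam]
  have hQnn : (0:ℝ) ≤ ∑ i, (SMC.sm u i - SMC.sm v i) ^ 2 :=
    Finset.sum_nonneg fun i _ => sq_nonneg _
  nlinarith [hcore]
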